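/- For a probability vector λ1 ≥ λ2 ≥ ... ≥ λd ≥ 0 with ∑ λi = 1 and fixed purity ∑ λi² = γ ∈ [1/d, 1], the minimum of the Shannon entropy -∑ λi log λi is attained at λ1 = ... = λ_{k-1} = (1-α)/(k-1), λ_k = α, λ_{k+1} = ... = λ_d = 0, where k is the unique integer with 1/k ≤ γ ≤ 1/(k-1) and α = 1/k - √((1 - 1/k)(γ - 1/k)). -/

import Mathlib

open Real Filter Finset

namespace S2

noncomputable def cmp (A B C t : ℝ) : ℝ := C + ((1-3*t^2)*A + 2*t*B)/(1+3*t^2)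
noncomputable def cmp' (A B t : ℝ) : ℝ := (2*B - 12*t*A - 6*t^2*B)/(1+3*t^2)^2
lemma den_pos (t : ℝ) : (0:ℝ) < 1+3*t^2 := by positivity
lemma den_ne (t : ℝ) : (1+3*t^2 : ℝ) ≠ 0 := (den_pos t).ne'
lemma cmp_zero (A B C : ℝ) : cmp A B C 0 = C + A := by simp [cmp]
lemma cmp'_zero (A B : ℝ) : cmp' A B 0 = 2*B := by simp [cmp']

lemma hasDerivAt_cmp (A B C t : ℝ) : HasDerivAt (cmp A B C) (cmp' A B t) t := by
  have h1 : HasDerivAt (fun t : ℝ => (1-3*t^2)*A + 2*t*B) (-6*t*A + 2*B) t := by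
    have := ((hasDerivAt_pow 2 t).const_mul (3:ℝ)).const_sub (1:ℝ)
    have h := (this.mul_const A).add ((hasDerivAt_id t).const_mul (2:ℝ) |>.mul_const B)
    exact h.congr_deriv (by ring)
  have h2 : HasDerivAt (fun t : ℝ => 1+3*t^2) (6*t) t := by
    have := ((hasDerivAt_pow 2 t).const_mul (3:ℝ)).const_add (1:ℝ)
    exact this.congr_deriv (by ring)
  have h := (h1.div h2 (den_ne t)).const_add C
  refine h.congr_deriv ?_
  unfold cmp'
  field_simp
  ring

lemma hasDerivAt_cmp' (A B : ℝ) : HasDerivAt (cmp' A B) (-12*A) 0 := by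
  have h1 : HasDerivAt (fun t : ℝ => 2*B - 12*t*A - 6*t^2*B) (-12*A) 0 := by
    have ha : HasDerivAt (fun t : ℝ => 12*t*A) (12*A) 0 :=
      by simpa using (hasDerivAt_id (0:ℝ)).const_mul (12:ℝ) |>.mul_const A
    have hb : HasDerivAt (fun t : ℝ => 6*t^2*B) 0 0 := by
      have := ((hasDerivAt_pow 2 (0:ℝ)).const_mul (6:ℝ)).mul_const B
      simpa using this
    exact (((hasDerivAt_const (0:ℝ) (2*B)).sub ha).sub hb).congr_deriv (by ring)
  have h2 : HasDerivAt (fun t : ℝ => (1+3*t^2)^2) 0 0 := by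
    have hbase : HasDerivAt (fun t : ℝ => 1+3*t^2) 0 0 := by
      simpa using ((hasDerivAt_pow 2 (0:ℝ)).const_mul (3:ℝ)).const_add (1:ℝ)
    exact (hbase.pow 2).congr_deriv (by ring)
  have h := h1.div h2 (by norm_num)
  exact h.congr_deriv (by norm_num)

lemma continuous_cmp (A B C : ℝ) : Continuous (cmp A B C) := by
  unfold cmp
  fun_prop (disch := intros; exact (den_ne _))

lemma hasDerivAt_nml_cmp (A B C t : ℝ) (h : cmp A B C t ≠ 0) :
    HasDerivAt (fun t => Real.negMulLog (cmp A B C t))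
      ((-Real.log (cmp A B C t) - 1) * cmp' A B t) t :=
  (Real.hasDerivAt_negMulLog h).comp t (hasDerivAt_cmp A B C t)

lemma hasDerivAt_nml_cmp' (A B C : ℝ) (h : C + A ≠ 0) :
    HasDerivAt (fun t => (-Real.log (cmp A B C t) - 1) * cmp' A B t)
      ((-((C+A)⁻¹ * (2*B))) * (2*B) + (-Real.log (C+A) - 1) * (-12*A)) 0 := by
  have hne : cmp A B C 0 ≠ 0 := by rw [cmp_zero]; exact h
  have hlog : HasDerivAt (fun t => Real.log (cmp A B C t)) ((cmp A B C 0)⁻¹ * cmp' A B 0) 0 :=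
    (Real.hasDerivAt_log hne).comp 0 (hasDerivAt_cmp A B C 0)
  have h1 : HasDerivAt (fun t => -Real.log (cmp A B C t) - 1)
      (-((cmp A B C 0)⁻¹ * cmp' A B 0)) 0 := (hlog.neg).sub_const 1
  have h2 := h1.mul (hasDerivAt_cmp' A B)
  rw [cmp_zero, cmp'_zero] at h2
  exact h2



lemma not_isLocalMin_of_neg_deriv2 {F F' : ℝ → ℝ} {D ε : ℝ} (hε : 0 < ε)
    (hd : ∀ t, |t| < ε → HasDerivAt F (F' t) t) (h0 : F' 0 = 0)
    (hD : HasDerivAt F' D 0) (hneg : D < 0) : ¬ IsLocalMin F 0 := by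
  intro hmin
  have hslope : Tendsto (slope F' 0) (nhdsWithin 0 {(0:ℝ)}ᶜ) (nhds D) :=
    hasDerivAt_iff_tendsto_slope.mp hD
  have hev : ∀ᶠ t in nhdsWithin 0 {(0:ℝ)}ᶜ, slope F' 0 t < 0 :=
    hslope.eventually_lt_const hneg
  have hev' : ∀ᶠ t in nhdsWithin (0:ℝ) (Set.Ioi 0), slope F' 0 t < 0 :=
    hev.filter_mono (nhdsWithin_mono 0 (fun x hx => ne_of_gt hx))
  rw [eventually_nhdsWithin_iff] at hev'
  rw [Metric.eventually_nhds_iff] at hev'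
  obtain ⟨δ, hδpos, hδ⟩ := hev'
  -- F' t < 0 for 0 < t < δ
  have hF'neg : ∀ t, 0 < t → t < δ → F' t < 0 := by
    intro t ht htδ
    have := hδ (by simpa [abs_of_pos ht] using htδ) ht
    rw [slope_def_field, h0] at this
    have : (F' t) / t < 0 := by simpa using this
    rcases div_neg_iff.mp this with h|h
    · linarith [h.2]
    · exact h.1
  set c := min (ε/2) (δ/2) with hc
  have hcpos : 0 < c := by positivity
  have hanti : StrictAntiOn F (Set.Icc 0 c) := by
    apply strictAntiOn_of_deriv_neg (convex_Icc 0 c)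
    · intro x hx
      exact (hd x (by
        rw [Set.mem_Icc] at hx
        rw [abs_lt]; constructor <;> nlinarith [min_le_left (ε/2) (δ/2), min_le_right (ε/2) (δ/2)])).continuousAt.continuousWithinAt
    · intro x hx
      rw [interior_Icc, Set.mem_Ioo] at hx
      have hder := hd x (by
        rw [abs_lt]; constructor <;> nlinarith [min_le_left (ε/2) (δ/2), min_le_right (ε/2) (δ/2)] )
      rw [hder.deriv]
      exact hF'neg x hx.1 (by nlinarith [min_le_right (ε/2) (δ/2)])
  obtain ⟨η, hηpos, hη⟩ := Metric.eventually_nhds_iff.mp hmin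
  set t := min (c/2) (η/2) with ht
  have htpos : 0 < t := by positivity
  have h1 : F 0 ≤ F t := hη (by
    simp only [dist_zero_right, Real.norm_eq_abs, abs_of_pos htpos]
    nlinarith [min_le_right (c/2) (η/2)])
  have h2 : F t < F 0 := by
    have := hanti (Set.mem_Icc.mpr ⟨le_refl 0, le_of_lt hcpos⟩)
      (Set.mem_Icc.mpr ⟨le_of_lt htpos, by nlinarith [min_le_left (c/2) (η/2)]⟩) htpos
    exact this
  linarith



lemma sum_split3 {ι : Type*} [Fintype ι] [DecidableEq ι] (f : ι → ℝ) {i j l : ι}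
    (hij : i ≠ j) (hil : i ≠ l) (hjl : j ≠ l) :
    ∑ m, f m = f i + f j + f l + ∑ m ∈ Finset.univ \ {i,j,l}, f m := by
  have hsub : ({i,j,l} : Finset ι) ⊆ Finset.univ := Finset.subset_univ _
  rw [← Finset.sum_sdiff hsub]
  have h3 : ∑ m ∈ ({i,j,l} : Finset ι), f m = f i + f j + f l := by
    rw [Finset.sum_insert (by simp [hij, hil]), Finset.sum_insert (by simp [hjl]),
      Finset.sum_singleton]
    ring
  rw [h3]; ring

noncomputable def pth {d : ℕ} (q : Fin d → ℝ) (i j l : Fin d) (t : ℝ) : Fin d → ℝ :=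
  fun m => if m = i then cmp (q i - (q i + q j + q l)/3) (q l - q j) ((q i + q j + q l)/3) t
    else if m = j then cmp (q j - (q i + q j + q l)/3) (q i - q l) ((q i + q j + q l)/3) t
    else if m = l then cmp (q l - (q i + q j + q l)/3) (q j - q i) ((q i + q j + q l)/3) t
    else q m

section pathfacts
variable {d : ℕ} (q : Fin d → ℝ) (i j l : Fin d)

lemma pth_i (t : ℝ) :
    pth q i j l t i = cmp (q i - (q i + q j + q l)/3) (q l - q j) ((q i + q j + q l)/3) t := by
  simp [pth]

lemma pth_j (hij : i ≠ j) (hjl : j ≠ l) (t : ℝ) :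
    pth q i j l t j = cmp (q j - (q i + q j + q l)/3) (q i - q l) ((q i + q j + q l)/3) t := by
  simp [pth, hij.symm, hjl]

lemma pth_l (hil : i ≠ l) (hjl : j ≠ l) (t : ℝ) :
    pth q i j l t l = cmp (q l - (q i + q j + q l)/3) (q j - q i) ((q i + q j + q l)/3) t := by
  simp [pth, hil.symm, hjl.symm]

lemma pth_other (t : ℝ) {m : Fin d} (hmi : m ≠ i) (hmj : m ≠ j) (hml : m ≠ l) :
    pth q i j l t m = q m := by
  simp [pth, hmi, hmj, hml]

lemma pth_sum_g (hij : i ≠ j) (hil : i ≠ l) (hjl : j ≠ l) (g : ℝ → ℝ) (t : ℝ) :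
    ∑ m, g (pth q i j l t m) =
      g (pth q i j l t i) + g (pth q i j l t j) + g (pth q i j l t l)
        + ∑ m ∈ Finset.univ \ {i,j,l}, g (q m) := by
  rw [sum_split3 (fun m => g (pth q i j l t m)) hij hil hjl]
  congr 1
  apply Finset.sum_congr rfl
  intro m hm
  simp only [Finset.mem_sdiff, Finset.mem_insert, Finset.mem_singleton] at hm
  push_neg at hm
  rw [pth_other q i j l t hm.2.1 hm.2.2.1 hm.2.2.2]

-- the three-coordinate algebraic identities
lemma cmp_add_identity (x y z t : ℝ) :
    cmp (x - (x+y+z)/3) (z - y) ((x+y+z)/3) t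
      + cmp (y - (x+y+z)/3) (x - z) ((x+y+z)/3) t
      + cmp (z - (x+y+z)/3) (y - x) ((x+y+z)/3) t = x + y + z := by
  have h : (1+3*t^2 : ℝ) ≠ 0 := by positivity
  unfold cmp
  field_simp
  ring

lemma cmp_sq_identity (x y z t : ℝ) :
    (cmp (x - (x+y+z)/3) (z - y) ((x+y+z)/3) t)^2
      + (cmp (y - (x+y+z)/3) (x - z) ((x+y+z)/3) t)^2
      + (cmp (z - (x+y+z)/3) (y - x) ((x+y+z)/3) t)^2 = x^2 + y^2 + z^2 := by
  have h : (1+3*t^2 : ℝ) ≠ 0 := by positivity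
  unfold cmp
  field_simp
  ring

lemma pth_sum (hij : i ≠ j) (hil : i ≠ l) (hjl : j ≠ l) (t : ℝ) : ∑ m, pth q i j l t m = ∑ m, q m := by
  have := pth_sum_g q i j l hij hil hjl (fun x => x) t
  rw [show (∑ m, pth q i j l t m) = ∑ m, (fun x => x) (pth q i j l t m) from rfl, this,
    sum_split3 q hij hil hjl]
  rw [pth_i, pth_j q i j l hij hjl, pth_l q i j l hil hjl, cmp_add_identity]

lemma pth_sum_sq (hij : i ≠ j) (hil : i ≠ l) (hjl : j ≠ l) (t : ℝ) : ∑ m, (pth q i j l t m)^2 = ∑ m, (q m)^2 := by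
  rw [pth_sum_g q i j l hij hil hjl (fun x => x^2) t, sum_split3 (fun m => (q m)^2) hij hil hjl]
  rw [pth_i, pth_j q i j l hij hjl, pth_l q i j l hil hjl, cmp_sq_identity]

end pathfacts

lemma pth_zero {d : ℕ} (q : Fin d → ℝ) (i j l : Fin d) : pth q i j l 0 = q := by
  funext m
  unfold pth
  rcases eq_or_ne m i with rfl|hmi
  · rw [if_pos rfl, cmp_zero]; ring
  rcases eq_or_ne m j with rfl|hmj
  · rw [if_neg hmi, if_pos rfl, cmp_zero]; ring
  rcases eq_or_ne m l with rfl|hml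
  · rw [if_neg hmi, if_neg hmj, if_pos rfl, cmp_zero]; ring
  · rw [if_neg hmi, if_neg hmj, if_neg hml]

lemma isLocalMin_pth {d : ℕ} {γ : ℝ} {q : Fin d → ℝ}
    (hq0 : ∀ m, 0 ≤ q m) (hqs : ∑ m, q m = 1) (hqp : ∑ m, (q m)^2 = γ)
    (hmin : ∀ p : Fin d → ℝ, (∀ m, 0 ≤ p m) → ∑ m, p m = 1 → ∑ m, (p m)^2 = γ →
      ∑ m, Real.negMulLog (q m) ≤ ∑ m, Real.negMulLog (p m))
    (i j l : Fin d) (hij : i ≠ j) (hil : i ≠ l) (hjl : j ≠ l)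
    (hx : 0 < q i) (hy : 0 < q j) (hz : 0 < q l) :
    ∃ ε > 0, (∀ t : ℝ, |t| < ε →
        0 < pth q i j l t i ∧ 0 < pth q i j l t j ∧ 0 < pth q i j l t l) ∧
      IsLocalMin (fun t => ∑ m, Real.negMulLog (pth q i j l t m)) 0 := by
  have hcont : ∀ A B C : ℝ, 0 < C + A → ∀ᶠ t in nhds (0:ℝ), 0 < cmp A B C t := by
    intro A B C h
    have htd : Filter.Tendsto (cmp A B C) (nhds 0) (nhds (cmp A B C 0)) :=
      (continuous_cmp A B C).continuousAt
    rw [cmp_zero] at htd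
    exact htd.eventually_const_lt h
  have hEi : ∀ᶠ t in nhds (0:ℝ), 0 < pth q i j l t i := by
    simp only [pth_i]
    exact hcont _ _ _ (by rw [show (q i + q j + q l)/3 + (q i - (q i + q j + q l)/3) = q i by ring]; exact hx)
  have hEj : ∀ᶠ t in nhds (0:ℝ), 0 < pth q i j l t j := by
    simp only [pth_j q i j l hij hjl]
    exact hcont _ _ _ (by rw [show (q i + q j + q l)/3 + (q j - (q i + q j + q l)/3) = q j by ring]; exact hy)
  have hEl : ∀ᶠ t in nhds (0:ℝ), 0 < pth q i j l t l := by
    simp only [pth_l q i j l hil hjl]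
    exact hcont _ _ _ (by rw [show (q i + q j + q l)/3 + (q l - (q i + q j + q l)/3) = q l by ring]; exact hz)
  obtain ⟨ε, hεpos, hε⟩ := Metric.eventually_nhds_iff.mp ((hEi.and hEj).and hEl)
  have hposall : ∀ t : ℝ, |t| < ε →
      0 < pth q i j l t i ∧ 0 < pth q i j l t j ∧ 0 < pth q i j l t l := by
    intro t ht
    have := hε (by simpa [Real.dist_eq] using ht)
    exact ⟨this.1.1, this.1.2, this.2⟩
  refine ⟨ε, hεpos, hposall, ?_⟩
  rw [IsLocalMin, IsMinFilter]
  rw [Metric.eventually_nhds_iff]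
  refine ⟨ε, hεpos, ?_⟩
  intro t ht
  rw [Real.dist_eq, sub_zero] at ht
  obtain ⟨h1, h2, h3⟩ := hposall t ht
  have hmem0 : ∀ m, 0 ≤ pth q i j l t m := by
    intro m
    rcases eq_or_ne m i with rfl|hmi
    · exact h1.le
    rcases eq_or_ne m j with rfl|hmj
    · exact h2.le
    rcases eq_or_ne m l with rfl|hml
    · exact h3.le
    · rw [pth_other q i j l t hmi hmj hml]; exact hq0 m
  have hs := (pth_sum q i j l hij hil hjl t).trans hqs
  have hp := (pth_sum_sq q i j l hij hil hjl t).trans hqp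
  have := hmin (pth q i j l t) hmem0 hs hp
  simpa [pth_zero q i j l] using this

lemma deriv_sum3_zero (x y z R : ℝ) (hx : 0 < x) (hy : 0 < y) (hz : 0 < z)
    (hloc : IsLocalMin (fun t =>
      Real.negMulLog (cmp (x - (x+y+z)/3) (z-y) ((x+y+z)/3) t)
      + Real.negMulLog (cmp (y - (x+y+z)/3) (x-z) ((x+y+z)/3) t)
      + Real.negMulLog (cmp (z - (x+y+z)/3) (y-x) ((x+y+z)/3) t) + R) 0) :
    Real.log x * (z - y) + Real.log y * (x - z) + Real.log z * (y - x) = 0 := by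
  have e1 : (x+y+z)/3 + (x - (x+y+z)/3) = x := by ring
  have e2 : (x+y+z)/3 + (y - (x+y+z)/3) = y := by ring
  have e3 : (x+y+z)/3 + (z - (x+y+z)/3) = z := by ring
  have h1 : HasDerivAt (fun t => Real.negMulLog (cmp (x - (x+y+z)/3) (z-y) ((x+y+z)/3) t))
      ((-Real.log x - 1)*(2*(z-y))) 0 := by
    have hne : cmp (x - (x+y+z)/3) (z-y) ((x+y+z)/3) 0 ≠ 0 := by
      rw [cmp_zero, e1]; exact hx.ne'
    have := hasDerivAt_nml_cmp _ _ _ 0 hne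
    rwa [cmp_zero, cmp'_zero, e1] at this
  have h2 : HasDerivAt (fun t => Real.negMulLog (cmp (y - (x+y+z)/3) (x-z) ((x+y+z)/3) t))
      ((-Real.log y - 1)*(2*(x-z))) 0 := by
    have hne : cmp (y - (x+y+z)/3) (x-z) ((x+y+z)/3) 0 ≠ 0 := by
      rw [cmp_zero, e2]; exact hy.ne'
    have := hasDerivAt_nml_cmp _ _ _ 0 hne
    rwa [cmp_zero, cmp'_zero, e2] at this
  have h3 : HasDerivAt (fun t => Real.negMulLog (cmp (z - (x+y+z)/3) (y-x) ((x+y+z)/3) t))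
      ((-Real.log z - 1)*(2*(y-x))) 0 := by
    have hne : cmp (z - (x+y+z)/3) (y-x) ((x+y+z)/3) 0 ≠ 0 := by
      rw [cmp_zero, e3]; exact hz.ne'
    have := hasDerivAt_nml_cmp _ _ _ 0 hne
    rwa [cmp_zero, cmp'_zero, e3] at this
  have htot := ((h1.add h2).add h3).add_const R
  have hder := hloc.deriv_eq_zero
  have hder := hloc.hasDerivAt_eq_zero htot
  linear_combination (-1/2 : ℝ) * hder

lemma no_dup_low (u w R : ℝ) (hu : 0 < u) (huw : u < w) {ε : ℝ} (hε : 0 < ε)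
    (hpos : ∀ t : ℝ, |t| < ε →
      0 < cmp (u - (u+u+w)/3) (w-u) ((u+u+w)/3) t ∧
      0 < cmp (u - (u+u+w)/3) (u-w) ((u+u+w)/3) t ∧
      0 < cmp (w - (u+u+w)/3) (u-u) ((u+u+w)/3) t)
    (hloc : IsLocalMin (fun t =>
      Real.negMulLog (cmp (u - (u+u+w)/3) (w-u) ((u+u+w)/3) t)
      + Real.negMulLog (cmp (u - (u+u+w)/3) (u-w) ((u+u+w)/3) t)
      + Real.negMulLog (cmp (w - (u+u+w)/3) (u-u) ((u+u+w)/3) t) + R) 0) : False := by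
  have hw : 0 < w := hu.trans huw
  have e1 : (u+u+w)/3 + (u - (u+u+w)/3) = u := by ring
  have e3 : (u+u+w)/3 + (w - (u+u+w)/3) = w := by ring
  set F' : ℝ → ℝ := fun t =>
    (-Real.log (cmp (u - (u+u+w)/3) (w-u) ((u+u+w)/3) t) - 1) * cmp' (u - (u+u+w)/3) (w-u) t
    + (-Real.log (cmp (u - (u+u+w)/3) (u-w) ((u+u+w)/3) t) - 1) * cmp' (u - (u+u+w)/3) (u-w) t
    + (-Real.log (cmp (w - (u+u+w)/3) (u-u) ((u+u+w)/3) t) - 1) * cmp' (w - (u+u+w)/3) (u-u) t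
    with hF'def
  have hd : ∀ t : ℝ, |t| < ε → HasDerivAt (fun t =>
      Real.negMulLog (cmp (u - (u+u+w)/3) (w-u) ((u+u+w)/3) t)
      + Real.negMulLog (cmp (u - (u+u+w)/3) (u-w) ((u+u+w)/3) t)
      + Real.negMulLog (cmp (w - (u+u+w)/3) (u-u) ((u+u+w)/3) t) + R) (F' t) t := by
    intro t ht
    obtain ⟨p1, p2, p3⟩ := hpos t ht
    exact (((hasDerivAt_nml_cmp _ _ _ t p1.ne').add
      (hasDerivAt_nml_cmp _ _ _ t p2.ne')).add
      (hasDerivAt_nml_cmp _ _ _ t p3.ne')).add_const R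
  have h0 : F' 0 = 0 := by
    rw [hF'def]
    simp only [cmp_zero, cmp'_zero, e1, e3]
    ring
  have hD : HasDerivAt F'
      (((-(u⁻¹ * (2*(w-u)))) * (2*(w-u)) + (-Real.log u - 1) * (-12*(u - (u+u+w)/3)))
      + ((-(u⁻¹ * (2*(u-w)))) * (2*(u-w)) + (-Real.log u - 1) * (-12*(u - (u+u+w)/3)))
      + ((-(w⁻¹ * (2*(u-u)))) * (2*(u-u)) + (-Real.log w - 1) * (-12*(w - (u+u+w)/3)))) 0 := by
    have g1 := hasDerivAt_nml_cmp' (u - (u+u+w)/3) (w-u) ((u+u+w)/3) (by rw [e1]; exact hu.ne')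
    have g2 := hasDerivAt_nml_cmp' (u - (u+u+w)/3) (u-w) ((u+u+w)/3) (by rw [e1]; exact hu.ne')
    have g3 := hasDerivAt_nml_cmp' (w - (u+u+w)/3) (u-u) ((u+u+w)/3) (by rw [e3]; exact hw.ne')
    rw [e1] at g1 g2
    rw [e3] at g3
    exact (g1.add g2).add g3
  have hlogkey : Real.log w - Real.log u < (w - u) * u⁻¹ := by
    have h1 : Real.log (w/u) < w/u - 1 :=
      Real.log_lt_sub_one_of_pos (by positivity) (by
        intro h
        have : w = u := by field_simp at h; linarith
        linarith)
    rw [Real.log_div hw.ne' hu.ne'] at h1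
    have : w/u - 1 = (w - u) * u⁻¹ := by field_simp
    linarith [h1, this.ge]
  have hDneg : (((-(u⁻¹ * (2*(w-u)))) * (2*(w-u)) + (-Real.log u - 1) * (-12*(u - (u+u+w)/3)))
      + ((-(u⁻¹ * (2*(u-w)))) * (2*(u-w)) + (-Real.log u - 1) * (-12*(u - (u+u+w)/3)))
      + ((-(w⁻¹ * (2*(u-u)))) * (2*(u-u)) + (-Real.log w - 1) * (-12*(w - (u+u+w)/3)))) < 0 := by
    have hwu : 0 < w - u := by linarith
    have hui : 0 < u⁻¹ := inv_pos.mpr hu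
    nlinarith [mul_pos hwu hui, mul_pos (mul_pos hwu hwu) hui, hlogkey,
      mul_lt_mul_of_pos_left hlogkey hwu]
  exact not_isLocalMin_of_neg_deriv2 hε hd h0 hD hDneg hloc

lemma min_first_order {d : ℕ} {γ : ℝ} {q : Fin d → ℝ}
    (hq0 : ∀ m, 0 ≤ q m) (hqs : ∑ m, q m = 1) (hqp : ∑ m, (q m)^2 = γ)
    (hmin : ∀ p : Fin d → ℝ, (∀ m, 0 ≤ p m) → ∑ m, p m = 1 → ∑ m, (p m)^2 = γ →
      ∑ m, Real.negMulLog (q m) ≤ ∑ m, Real.negMulLog (p m))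
    (i j l : Fin d) (hij : i ≠ j) (hil : i ≠ l) (hjl : j ≠ l)
    (hx : 0 < q i) (hy : 0 < q j) (hz : 0 < q l) :
    Real.log (q i) * (q l - q j) + Real.log (q j) * (q i - q l)
      + Real.log (q l) * (q j - q i) = 0 := by
  obtain ⟨ε, hεpos, hpos, hloc⟩ := isLocalMin_pth hq0 hqs hqp hmin i j l hij hil hjl hx hy hz
  have hFeq : (fun t => ∑ m, Real.negMulLog (pth q i j l t m)) = (fun t =>
      Real.negMulLog (cmp (q i - (q i + q j + q l)/3) (q l - q j) ((q i + q j + q l)/3) t)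
      + Real.negMulLog (cmp (q j - (q i + q j + q l)/3) (q i - q l) ((q i + q j + q l)/3) t)
      + Real.negMulLog (cmp (q l - (q i + q j + q l)/3) (q j - q i) ((q i + q j + q l)/3) t)
      + ∑ m ∈ Finset.univ \ {i,j,l}, Real.negMulLog (q m)) := by
    funext t
    rw [pth_sum_g q i j l hij hil hjl Real.negMulLog t, pth_i, pth_j q i j l hij hjl,
      pth_l q i j l hil hjl]
  rw [hFeq] at hloc
  exact deriv_sum3_zero _ _ _ _ hx hy hz hloc

lemma min_second_order {d : ℕ} {γ : ℝ} {q : Fin d → ℝ}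
    (hq0 : ∀ m, 0 ≤ q m) (hqs : ∑ m, q m = 1) (hqp : ∑ m, (q m)^2 = γ)
    (hmin : ∀ p : Fin d → ℝ, (∀ m, 0 ≤ p m) → ∑ m, p m = 1 → ∑ m, (p m)^2 = γ →
      ∑ m, Real.negMulLog (q m) ≤ ∑ m, Real.negMulLog (p m))
    (i j l : Fin d) (hij : i ≠ j) (hil : i ≠ l) (hjl : j ≠ l)
    (hx : 0 < q i) (heq : q j = q i) (hlt : q i < q l) : False := by
  have hy : 0 < q j := heq ▸ hx
  have hz : 0 < q l := hx.trans hlt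
  obtain ⟨ε, hεpos, hpos, hloc⟩ := isLocalMin_pth hq0 hqs hqp hmin i j l hij hil hjl hx hy hz
  have hFeq : (fun t => ∑ m, Real.negMulLog (pth q i j l t m)) = (fun t =>
      Real.negMulLog (cmp (q i - (q i + q i + q l)/3) (q l - q i) ((q i + q i + q l)/3) t)
      + Real.negMulLog (cmp (q i - (q i + q i + q l)/3) (q i - q l) ((q i + q i + q l)/3) t)
      + Real.negMulLog (cmp (q l - (q i + q i + q l)/3) (q i - q i) ((q i + q i + q l)/3) t)
      + ∑ m ∈ Finset.univ \ {i,j,l}, Real.negMulLog (q m)) := by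
    funext t
    rw [pth_sum_g q i j l hij hil hjl Real.negMulLog t, pth_i, pth_j q i j l hij hjl,
      pth_l q i j l hil hjl, heq]
  rw [hFeq] at hloc
  have hposc : ∀ t : ℝ, |t| < ε →
      0 < cmp (q i - (q i + q i + q l)/3) (q l - q i) ((q i + q i + q l)/3) t ∧
      0 < cmp (q i - (q i + q i + q l)/3) (q i - q l) ((q i + q i + q l)/3) t ∧
      0 < cmp (q l - (q i + q i + q l)/3) (q i - q i) ((q i + q i + q l)/3) t := by
    intro t ht
    obtain ⟨p1, p2, p3⟩ := hpos t ht
    rw [pth_i] at p1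
    rw [pth_j q i j l hij hjl] at p2
    rw [pth_l q i j l hil hjl] at p3
    rw [heq] at p1 p2 p3
    exact ⟨p1, p2, p3⟩
  exact no_dup_low (q i) (q l) _ hx hlt hεpos hposc hloc

lemma three_vals_contra {x y z : ℝ} (hz : 0 < z) (hzy : z < y) (hyx : y < x)
    (hid : Real.log x * (z - y) + Real.log y * (x - z) + Real.log z * (y - x) = 0) :
    False := by
  have hxz : 0 < x - z := by linarith
  set t : ℝ := (y - z)/(x - z) with ht
  have ht0 : 0 < t := by rw [ht]; exact div_pos (by linarith) hxz
  have ht1 : 0 < 1 - t := by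
    rw [ht, sub_pos, div_lt_one hxz]
    linarith
  have hcomb : t * x + (1 - t) * z = y := by
    rw [ht]; field_simp
    ring
  have hstrict := strictConcaveOn_log_Ioi.2 (Set.mem_Ioi.mpr (by linarith : (0:ℝ) < x))
    (Set.mem_Ioi.mpr hz) (by intro h; rw [h] at hyx; linarith) ht0 ht1 (by linarith)
  rw [smul_eq_mul, smul_eq_mul, smul_eq_mul, smul_eq_mul, hcomb] at hstrict
  -- hstrict : t * log x + (1-t) * log z < log y
  have hexp : t * Real.log x + (1 - t) * Real.log z = Real.log y := by
    have h1 : (x - z) * Real.log y = (y - z) * Real.log x + (x - y) * Real.log z := by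
      linear_combination hid
    rw [ht]
    field_simp
    linear_combination -h1
  linarith

lemma alg_two_level (k mm : ℕ) (hk : 2 ≤ k) (γ u v : ℝ) (hu : 0 < u) (huv : u < v)
    (hm : 1 ≤ mm) (hsum : (mm:ℝ)*v + u = 1) (hpur : (mm:ℝ)*v^2 + u^2 = γ)
    (hk1 : 1/(k:ℝ) ≤ γ) (hk2 : γ ≤ 1/((k:ℝ)-1)) :
    (mm:ℝ) * Real.negMulLog v + Real.negMulLog u
      = ((k:ℝ)-1) * Real.negMulLog
          ((1 - (1/(k:ℝ) - Real.sqrt ((1 - 1/(k:ℝ))*(γ - 1/(k:ℝ)))))/((k:ℝ)-1))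
        + Real.negMulLog (1/(k:ℝ) - Real.sqrt ((1 - 1/(k:ℝ))*(γ - 1/(k:ℝ)))) := by
  have hkR : (2:ℝ) ≤ (k:ℝ) := by exact_mod_cast hk
  have hk0 : (0:ℝ) < (k:ℝ) := by linarith
  have hk1' : (0:ℝ) < (k:ℝ) - 1 := by linarith
  have hmR : (1:ℝ) ≤ (mm:ℝ) := by exact_mod_cast hm
  have hmpos : (0:ℝ) < (mm:ℝ) := by linarith
  have hv : 0 < v := lt_trans hu huv
  -- γ > 1/(m+1)
  have hγlow : 1/((mm:ℝ)+1) < γ := by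
    rw [div_lt_iff₀ (by positivity)]
    nlinarith [sq_nonneg (v - u), mul_pos hmpos (mul_pos (sub_pos.mpr huv) (sub_pos.mpr huv))]
  -- γ < 1/m
  have hγhigh : γ < 1/(mm:ℝ) := by
    rw [lt_div_iff₀ hmpos]
    nlinarith [mul_pos hu hv, mul_pos (mul_pos hmpos hu) (sub_pos.mpr huv), mul_pos hu hu]
  -- m = k - 1
  have hklem : ((k:ℝ)-1) < (mm:ℝ)+1 := by
    have h := lt_of_lt_of_le hγlow hk2
    rw [div_lt_div_iff₀ (by positivity) hk1'] at h
    linarith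
  have hklem2 : (mm:ℝ) < (k:ℝ) := by
    have h := lt_of_le_of_lt hk1 hγhigh
    rw [div_lt_div_iff₀ hk0 hmpos] at h
    linarith
  have hmk : mm + 1 = k := by
    have h1 : k < mm + 2 := by exact_mod_cast (by push_cast; linarith : ((k:ℝ)) < ((mm:ℝ)+2))
    have h2 : mm < k := by exact_mod_cast hklem2
    omega
  have hmcast : (mm:ℝ) = (k:ℝ) - 1 := by
    have : ((mm:ℝ)+1) = (k:ℝ) := by exact_mod_cast congrArg (Nat.cast : ℕ → ℝ) hmk
    linarith
  rw [hmcast] at hsum hpur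
  -- quadratic for u
  have hquad : (k:ℝ)*u^2 - 2*u + 1 - ((k:ℝ)-1)*γ = 0 := by
    linear_combination ((k:ℝ)-1)*hpur - ((1-u)+((k:ℝ)-1)*v)*hsum
  have hrad0 : 0 ≤ (1 - 1/(k:ℝ))*(γ - 1/(k:ℝ)) := by
    apply mul_nonneg
    · rw [sub_nonneg, div_le_one hk0]; linarith
    · linarith [hk1]
  have hult : u < 1/(k:ℝ) := by
    rw [lt_div_iff₀ hk0]
    nlinarith
  have hsqeq : (u - 1/(k:ℝ))^2 = (1 - 1/(k:ℝ))*(γ - 1/(k:ℝ)) := by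
    have hkne : (k:ℝ) ≠ 0 := hk0.ne'
    field_simp
    linear_combination ((k:ℝ)) * hquad
  have hsqrt : Real.sqrt ((1 - 1/(k:ℝ))*(γ - 1/(k:ℝ))) = 1/(k:ℝ) - u := by
    rw [show (1 - 1/(k:ℝ))*(γ - 1/(k:ℝ)) = (1/(k:ℝ) - u)^2 by linear_combination -hsqeq]
    exact Real.sqrt_sq (by linarith)
  have hA : 1/(k:ℝ) - Real.sqrt ((1 - 1/(k:ℝ))*(γ - 1/(k:ℝ))) = u := by
    rw [hsqrt]; ring
  have hB : (1 - (1/(k:ℝ) - Real.sqrt ((1 - 1/(k:ℝ))*(γ - 1/(k:ℝ)))))/((k:ℝ)-1) = v := by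
    rw [hA]
    rw [div_eq_iff hk1'.ne']
    linarith
  rw [hB, hA, hmcast]

lemma alg_uniform (k mm : ℕ) (hk : 2 ≤ k) (γ v : ℝ) (hv : 0 < v)
    (hm : 1 ≤ mm) (hsum : (mm:ℝ)*v = 1) (hpur : (mm:ℝ)*v^2 = γ)
    (hk1 : 1/(k:ℝ) ≤ γ) (hk2 : γ ≤ 1/((k:ℝ)-1)) :
    (mm:ℝ) * Real.negMulLog v
      = ((k:ℝ)-1) * Real.negMulLog
          ((1 - (1/(k:ℝ) - Real.sqrt ((1 - 1/(k:ℝ))*(γ - 1/(k:ℝ)))))/((k:ℝ)-1))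
        + Real.negMulLog (1/(k:ℝ) - Real.sqrt ((1 - 1/(k:ℝ))*(γ - 1/(k:ℝ)))) := by
  have hkR : (2:ℝ) ≤ (k:ℝ) := by exact_mod_cast hk
  have hk0 : (0:ℝ) < (k:ℝ) := by linarith
  have hk1' : (0:ℝ) < (k:ℝ) - 1 := by linarith
  have hmR : (1:ℝ) ≤ (mm:ℝ) := by exact_mod_cast hm
  have hmpos : (0:ℝ) < (mm:ℝ) := by linarith
  have hγv : γ = v := by nlinarith [hsum, hpur]
  have hveq : v = 1/(mm:ℝ) := by
    rw [eq_div_iff hmpos.ne']; linarith [hsum]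
  -- k - 1 ≤ mm ≤ k
  have hup : (mm:ℝ) ≤ (k:ℝ) := by
    have h : 1/(k:ℝ) ≤ 1/(mm:ℝ) := by rw [← hveq, ← hγv] at *; exact hk1
    rw [div_le_div_iff₀ hk0 hmpos] at h
    linarith
  have hlow : (k:ℝ) - 1 ≤ (mm:ℝ) := by
    have h : 1/(mm:ℝ) ≤ 1/((k:ℝ)-1) := by rw [← hveq, ← hγv] at *; exact hk2
    rw [div_le_div_iff₀ hmpos hk1'] at h
    linarith
  have hcase : mm = k ∨ mm + 1 = k := by
    have h1 : mm ≤ k := by exact_mod_cast hup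
    have h2 : k - 1 ≤ mm := by
      have : ((k:ℝ) - 1) ≤ (mm:ℝ) := hlow
      have : ((k - 1 : ℕ) : ℝ) ≤ (mm:ℝ) := by
        push_cast [Nat.cast_sub (by omega : 1 ≤ k)]
        linarith
      exact_mod_cast this
    omega
  rcases hcase with heq|hmk
  · -- mm = k : γ = 1/k, A = B = 1/k = v
    have hmcast : (mm:ℝ) = (k:ℝ) := by exact_mod_cast heq
    have hvk : v = 1/(k:ℝ) := by rw [hveq, hmcast]
    have hγk : γ = 1/(k:ℝ) := by rw [hγv, hvk]
    have hrad : (1 - 1/(k:ℝ))*(γ - 1/(k:ℝ)) = 0 := by rw [hγk]; ring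
    rw [hrad, Real.sqrt_zero, sub_zero]
    have hB : (1 - 1/(k:ℝ))/((k:ℝ)-1) = 1/(k:ℝ) := by
      rw [div_eq_div_iff hk1'.ne' hk0.ne']
      field_simp
    rw [hB, ← hvk, hmcast]
    ring
  · -- mm = k - 1 : γ = 1/(k-1), A = 0, B = v
    have hmcast : (mm:ℝ) = (k:ℝ) - 1 := by
      have : ((mm:ℝ)+1) = (k:ℝ) := by exact_mod_cast congrArg (Nat.cast : ℕ → ℝ) hmk
      linarith
    have hvk : v = 1/((k:ℝ)-1) := by rw [hveq, hmcast]
    have hγk : γ = 1/((k:ℝ)-1) := by rw [hγv, hvk]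
    have hrad : (1 - 1/(k:ℝ))*(γ - 1/(k:ℝ)) = (1/(k:ℝ))^2 := by
      rw [hγk]
      field_simp
      ring
    rw [hrad, Real.sqrt_sq (by positivity)]
    have hA : 1/(k:ℝ) - 1/(k:ℝ) = (0:ℝ) := by ring
    rw [hA, Real.negMulLog_zero]
    have hB : (1 - (0:ℝ))/((k:ℝ)-1) = v := by rw [hvk]; ring
    rw [hB, hmcast]
    ring

lemma keyNL {d k : ℕ} (hk : 2 ≤ k) {γ : ℝ}
    (hk1 : 1/(k:ℝ) ≤ γ) (hk2 : γ ≤ 1/((k:ℝ)-1))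
    (lam : Fin d → ℝ) (hpos : ∀ i, 0 ≤ lam i) (hsum : ∑ i, lam i = 1)
    (hpur : ∑ i, (lam i)^2 = γ) :
    ((k:ℝ)-1) * Real.negMulLog
        ((1 - (1/(k:ℝ) - Real.sqrt ((1 - 1/(k:ℝ))*(γ - 1/(k:ℝ)))))/((k:ℝ)-1))
      + Real.negMulLog (1/(k:ℝ) - Real.sqrt ((1 - 1/(k:ℝ))*(γ - 1/(k:ℝ))))
      ≤ ∑ i, Real.negMulLog (lam i) := by
  classical
  set S : Set (Fin d → ℝ) :=
    {p | (∀ m, 0 ≤ p m) ∧ ∑ m, p m = 1 ∧ ∑ m, (p m)^2 = γ} with hSdef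
  have hlamS : lam ∈ S := ⟨hpos, hsum, hpur⟩
  have hbdd : S ⊆ Set.pi Set.univ (fun _ : Fin d => Set.Icc (0:ℝ) 1) := by
    rintro p ⟨h1, h2, h3⟩ m _
    refine ⟨h1 m, ?_⟩
    have := Finset.single_le_sum (f := p) (fun i _ => h1 i) (Finset.mem_univ m)
    rw [h2] at this
    exact this
  have hclosed : IsClosed S := by
    have e1 : {p : Fin d → ℝ | ∀ m, 0 ≤ p m} = ⋂ m, {p : Fin d → ℝ | 0 ≤ p m} := by
      ext p; simp [Set.mem_iInter]
    have h1 : IsClosed {p : Fin d → ℝ | ∀ m, 0 ≤ p m} := by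
      rw [e1]; exact isClosed_iInter fun m => isClosed_le continuous_const (continuous_apply m)
    have h2 : IsClosed {p : Fin d → ℝ | ∑ m, p m = 1} :=
      isClosed_eq (continuous_finset_sum _ fun i _ => continuous_apply i) continuous_const
    have h3 : IsClosed {p : Fin d → ℝ | ∑ m, (p m)^2 = γ} :=
      isClosed_eq (continuous_finset_sum _ fun i _ => (continuous_apply i).pow 2)
        continuous_const
    have : S = {p : Fin d → ℝ | ∀ m, 0 ≤ p m} ∩
        ({p : Fin d → ℝ | ∑ m, p m = 1} ∩ {p : Fin d → ℝ | ∑ m, (p m)^2 = γ}) := by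
      ext p; simp [hSdef, Set.mem_inter_iff, and_assoc]
    rw [this]
    exact h1.inter (h2.inter h3)
  have hcompact : IsCompact S :=
    (isCompact_univ_pi fun _ => isCompact_Icc).of_isClosed_subset hclosed hbdd
  have hcont : Continuous fun p : Fin d → ℝ => ∑ m, Real.negMulLog (p m) :=
    continuous_finset_sum _ fun i _ => Real.continuous_negMulLog.comp (continuous_apply i)
  obtain ⟨q, hqS, hqmin⟩ := hcompact.exists_isMinOn ⟨lam, hlamS⟩ hcont.continuousOn
  obtain ⟨hq0, hqs, hqp⟩ := hqS
  have hmin : ∀ p : Fin d → ℝ, (∀ m, 0 ≤ p m) → ∑ m, p m = 1 → ∑ m, (p m)^2 = γ →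
      ∑ m, Real.negMulLog (q m) ≤ ∑ m, Real.negMulLog (p m) :=
    fun p h1 h2 h3 => hqmin ⟨h1, h2, h3⟩
  suffices hstruct : ∑ m, Real.negMulLog (q m) = ((k:ℝ)-1) * Real.negMulLog
        ((1 - (1/(k:ℝ) - Real.sqrt ((1 - 1/(k:ℝ))*(γ - 1/(k:ℝ)))))/((k:ℝ)-1))
      + Real.negMulLog (1/(k:ℝ) - Real.sqrt ((1 - 1/(k:ℝ))*(γ - 1/(k:ℝ)))) by
    rw [← hstruct]
    exact hmin lam hpos hsum hpur
  -- structure of the minimizer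
  set P : Finset (Fin d) := Finset.univ.filter (fun m => 0 < q m) with hPdef
  have hPoff : ∀ m, m ∉ P → q m = 0 := by
    intro m hm
    simp only [hPdef, Finset.mem_filter, Finset.mem_univ, true_and, not_lt] at hm
    linarith [hq0 m]
  have hPsum : ∀ g : ℝ → ℝ, g 0 = 0 → ∑ m ∈ P, g (q m) = ∑ m, g (q m) := by
    intro g hg
    apply Finset.sum_subset (Finset.subset_univ P)
    intro x _ hx
    rw [hPoff x hx, hg]
  have hPs : ∑ m ∈ P, q m = 1 := by rw [hPsum (fun x => x) rfl]; exact hqs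
  have hPp : ∑ m ∈ P, (q m)^2 = γ := by
    rw [hPsum (fun x => x^2) (by norm_num)]; exact hqp
  have hPne : P.Nonempty := by
    by_contra h
    rw [Finset.not_nonempty_iff_eq_empty] at h
    rw [h, Finset.sum_empty] at hPs
    norm_num at hPs
  obtain ⟨iv, hivP, hiv⟩ := P.exists_max_image q hPne
  obtain ⟨iu, hiuP, hiu⟩ := P.exists_min_image q hPne
  have hupos : 0 < q iu := by
    simp only [hPdef, Finset.mem_filter] at hiuP; exact hiuP.2
  have hvpos : 0 < q iv := by
    simp only [hPdef, Finset.mem_filter] at hivP; exact hivP.2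
  have hposP : ∀ m ∈ P, 0 < q m := by
    intro m hm; simp only [hPdef, Finset.mem_filter] at hm; exact hm.2
  by_cases hcase : q iu = q iv
  · -- uniform case
    have hall : ∀ m ∈ P, q m = q iv :=
      fun m hm => le_antisymm (hiv m hm) (hcase ▸ hiu m hm)
    have hs' : (P.card:ℝ) * q iv = 1 := by
      rw [← hPs, Finset.sum_congr rfl hall, Finset.sum_const, nsmul_eq_mul]
    have hp' : (P.card:ℝ) * (q iv)^2 = γ := by
      rw [← hPp, Finset.sum_congr rfl (fun m hm => by rw [hall m hm]),
        Finset.sum_const, nsmul_eq_mul]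
    have hcard : 1 ≤ P.card := Finset.card_pos.mpr hPne
    have halg := alg_uniform k P.card hk γ (q iv) hvpos hcard hs' hp' hk1 hk2
    rw [← hPsum Real.negMulLog Real.negMulLog_zero,
      Finset.sum_congr rfl (fun m hm => by rw [hall m hm]), Finset.sum_const, nsmul_eq_mul]
    exact halg
  · -- two-level case
    have huv : q iu < q iv := lt_of_le_of_ne (hiu iv hivP) hcase
    have hval : ∀ m ∈ P, q m = q iu ∨ q m = q iv := by
      intro m hm
      by_contra h
      push_neg at h
      have hmu : q iu < q m := lt_of_le_of_ne (hiu m hm) (Ne.symm h.1)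
      have hmv : q m < q iv := lt_of_le_of_ne (hiv m hm) h.2
      have hmiu : m ≠ iu := fun e => h.1 (by rw [e])
      have hmiv : m ≠ iv := fun e => h.2 (by rw [e])
      have hiuiv : iv ≠ iu := fun e => by rw [e] at huv; exact lt_irrefl _ huv
      have hid := min_first_order hq0 hqs hqp hmin iv m iu (Ne.symm hmiv) hiuiv
        hmiu hvpos (hposP m hm) hupos
      exact three_vals_contra hupos hmu hmv hid
    have hPu : P.filter (fun m => q m = q iu) = {iu} := by
      apply Finset.eq_singleton_iff_unique_mem.mpr
      constructor
      · exact Finset.mem_filter.mpr ⟨hiuP, rfl⟩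
      · intro m hm
        rw [Finset.mem_filter] at hm
        by_contra hne
        have hiuiv : iu ≠ iv := fun e => hcase (by rw [e])
        have hmiv : m ≠ iv := fun e => by
          rw [e] at hm; exact hcase (hm.2.symm)
        exact min_second_order hq0 hqs hqp hmin m iu iv hne hmiv hiuiv
          (by rw [hm.2]; exact hupos) hm.2.symm (by rw [hm.2]; exact huv)
    have hPvval : ∀ m ∈ P.filter (fun m => ¬ q m = q iu), q m = q iv := by
      intro m hm
      rw [Finset.mem_filter] at hm
      rcases hval m hm.1 with h|h
      · exact absurd h hm.2
      · exact h
    have hsplit : ∀ g : ℝ → ℝ, ∑ m ∈ P, g (q m)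
        = ((P.filter (fun m => ¬ q m = q iu)).card : ℝ) * g (q iv) + g (q iu) := by
      intro g
      rw [← Finset.sum_filter_add_sum_filter_not P (fun m => q m = q iu) (fun m => g (q m))]
      rw [hPu, Finset.sum_singleton]
      rw [Finset.sum_congr rfl (fun m hm => by rw [hPvval m hm]), Finset.sum_const,
        nsmul_eq_mul]
      ring
    have hmm : 1 ≤ (P.filter (fun m => ¬ q m = q iu)).card := by
      apply Finset.card_pos.mpr
      exact ⟨iv, Finset.mem_filter.mpr ⟨hivP, fun e => hcase e.symm⟩⟩
    have hs' := hsplit (fun x => x)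
    have hp' := hsplit (fun x => x^2)
    rw [hPs] at hs'
    rw [hPp] at hp'
    have halg := alg_two_level k _ hk γ (q iu) (q iv) hupos huv hmm
      (by linarith [hs']) (by linarith [hp']) hk1 hk2
    rw [← hPsum Real.negMulLog Real.negMulLog_zero, hsplit Real.negMulLog]
    exact halg

end S2

/-- For a nonincreasing probability vector of length d with purity γ ∈ [1/d,1],
and k the integer with 1/k ≤ γ ≤ 1/(k-1), the Shannon entropy (base 2) is at
least the entropy of the spectrum λ1 = ⋯ = λ_{k-1} = (1-α)/(k-1), λ_k = α,
λ_{k+1} = ⋯ = λ_d = 0, with α = 1/k - √((1-1/k)(γ-1/k)). -/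
theorem stmt2 (d k : ℕ) (hd : 2 ≤ d) (γ : ℝ) (hγ1 : 1/(d:ℝ) ≤ γ) (hγ2 : γ ≤ 1)
    (hk1 : 1/(k:ℝ) ≤ γ) (hk2 : γ ≤ 1/((k:ℝ)-1))
    (lam : Fin d → ℝ) (hmono : ∀ i j : Fin d, i ≤ j → lam j ≤ lam i)
    (hpos : ∀ i, 0 ≤ lam i) (hsum : ∑ i, lam i = 1) (hpur : ∑ i, lam i ^ 2 = γ) :
    let a : ℝ := 1/(k:ℝ) - Real.sqrt ((1 - 1/(k:ℝ)) * (γ - 1/(k:ℝ)))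
    (-((1 - a) * Real.logb 2 ((1 - a)/((k:ℝ)-1))) - a * Real.logb 2 a ≤
      -∑ i, lam i * Real.logb 2 (lam i)) := by
  intro a
  have ha : a = 1/(k:ℝ) - Real.sqrt ((1 - 1/(k:ℝ)) * (γ - 1/(k:ℝ))) := rfl
  have hdpos : (0:ℝ) < (d:ℝ) := by
    have : (2:ℝ) ≤ (d:ℝ) := by exact_mod_cast hd
    linarith
  have hγpos : 0 < γ := lt_of_lt_of_le (by positivity) hγ1
  have hk : 2 ≤ k := by
    by_contra h
    push_neg at h
    interval_cases k
    · norm_num at hk2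
      linarith
    · norm_num at hk2
      linarith
  have hkR : (2:ℝ) ≤ (k:ℝ) := by exact_mod_cast hk
  have hkR1 : (0:ℝ) < (k:ℝ) - 1 := by linarith
  have hlog2 : 0 < Real.log 2 := Real.log_pos one_lt_two
  have key := S2.keyNL hk hk1 hk2 lam hpos hsum hpur
  have hR : -∑ i, lam i * Real.logb 2 (lam i) = (∑ i, Real.negMulLog (lam i))/Real.log 2 := by
    calc -∑ i, lam i * Real.logb 2 (lam i)
        = ∑ i, -(lam i * Real.logb 2 (lam i)) := by rw [Finset.sum_neg_distrib]
      _ = ∑ i, Real.negMulLog (lam i)/Real.log 2 := by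
          apply Finset.sum_congr rfl
          intro i _
          rw [Real.logb, Real.negMulLog]
          ring
      _ = (∑ i, Real.negMulLog (lam i))/Real.log 2 := by rw [Finset.sum_div]
  have hL : -((1 - a) * Real.logb 2 ((1 - a)/((k:ℝ)-1))) - a * Real.logb 2 a
      = (((k:ℝ)-1) * Real.negMulLog ((1 - a)/((k:ℝ)-1)) + Real.negMulLog a)/Real.log 2 := by
    rw [Real.logb, Real.logb, Real.negMulLog, Real.negMulLog]
    field_simp
    ring
  rw [hL, hR, div_le_div_iff_of_pos_right hlog2]
  rw [ha]
  exact key
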